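/- If h ∈ L¹([0,∞), ℂ^{p×m}) (the system is BIBO stable) then its Laplace transform G(s) = ∫₀^∞ e^{-st}h(t)dt is analytic on the open right half-plane and sup_{Re s > 0} σ_max(G(s)) = sup_{ω∈ℝ} σ_max(G(jω)), i.e., the H∞ norm is attained as a supremum on the boundary (maximum modulus principle for matrix H∞ functions). -/

import Mathlib

open MeasureTheory Matrix Filter Set Complex

attribute [local instance] Matrix.normedAddCommGroup Matrix.normedSpace

/-- The largest singular value of a complex matrix, as the operator norm of the
induced map between Euclidean spaces. -/
noncomputable def sigmaMax {p m : ℕ} (M : Matrix (Fin p) (Fin m) ℂ) : ℝ :=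
  ‖LinearMap.toContinuousLinearMap (Matrix.toEuclideanLin M)‖

lemma exp_mul_le {c t : ℝ} (hc : 0 < c) : Real.exp (-(c*t)) * t ≤ 1/c := by
  have e2 := Real.add_one_le_exp (c*t)
  have e3 := Real.exp_pos (c*t)
  rw [Real.exp_neg, inv_mul_le_iff₀ e3, mul_one_div, le_div_iff₀ hc]
  nlinarith

theorem laplace_analytic_and_boundary_sup {p m : ℕ}
    (h : ℝ → Matrix (Fin p) (Fin m) ℂ)
    (hint : @Integrable _ _ SeminormedAddGroup.toContinuousENorm _ _ h (volume.restrict (Set.Ici (0:ℝ))))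
    (G : ℂ → Matrix (Fin p) (Fin m) ℂ)
    (hG : ∀ s : ℂ, G s = ∫ t in Set.Ici (0:ℝ), Complex.exp (-s * t) • h t) :
    DifferentiableOn ℂ G {s : ℂ | 0 < s.re}
    ∧ (⨆ s : {s : ℂ // 0 < s.re}, sigmaMax (G s.1))
        = ⨆ ω : ℝ, sigmaMax (G (Complex.I * ω)) := by
  letI : ContinuousENorm (Matrix (Fin p) (Fin m) ℂ) := SeminormedAddGroup.toContinuousENorm
  letI : Norm (Matrix (Fin p) (Fin m) ℂ →L[ℂ] EuclideanSpace ℂ (Fin m) →L[ℂ] EuclideanSpace ℂ (Fin p)) :=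
    ContinuousLinearMap.hasOpNorm
  set μ := volume.restrict (Set.Ici (0:ℝ)) with hμ
  have hG' : G = fun s => ∫ t, Complex.exp (-s * t) • h t ∂μ := funext hG
  have hmeas := hint.1
  -- pointwise norm computation
  have hnorm : ∀ (s : ℂ) (t : ℝ), ‖Complex.exp (-s * t) • h t‖
      = Real.exp (-(s.re * t)) * ‖h t‖ := by
    intro s t
    rw [norm_smul, Complex.norm_exp]
    congr 2
    simp [Complex.mul_re]
  -- a.e. bound for Re s ≥ 0
  have hbound : ∀ s : ℂ, 0 ≤ s.re → ∀ᵐ t : ℝ ∂μ, ‖Complex.exp (-s * (t:ℝ)) • h t‖ ≤ ‖h t‖ := by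
    intro s hs
    rw [hμ, ae_restrict_iff' measurableSet_Ici]
    refine Eventually.of_forall fun t ht => ?_
    rw [hnorm]
    have : Real.exp (-(s.re * t)) ≤ 1 := by
      rw [Real.exp_le_one_iff]
      simp only [neg_nonpos]
      exact mul_nonneg hs ht
    nlinarith [norm_nonneg (h t)]
  have hFmeas : ∀ s : ℂ, AEStronglyMeasurable (fun t : ℝ => Complex.exp (-s * t) • h t) μ := by
    intro s
    exact (Continuous.aestronglyMeasurable (f := fun t : ℝ => Complex.exp (-s * t)) (by fun_prop)).smul hmeas
  have hInt : ∀ s : ℂ, 0 ≤ s.re → Integrable (fun t : ℝ => Complex.exp (-s * t) • h t) μ :=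
    fun s hs => Integrable.mono' hint.norm (hFmeas s) (hbound s hs)
  -- norm bound for G
  have hGnorm : ∀ s : ℂ, 0 ≤ s.re → ‖G s‖ ≤ ∫ t, ‖h t‖ ∂μ := by
    intro s hs
    rw [hG s]
    refine (norm_integral_le_integral_norm _).trans ?_
    exact integral_mono_ae (hInt s hs).norm hint.norm (hbound s hs)
  -- differentiability on the open right half-plane
  have hdiffG : DifferentiableOn ℂ G {s : ℂ | 0 < s.re} := by
    intro s₀ hs₀
    have hs₀' : (0:ℝ) < s₀.re := hs₀
    have hε : (0:ℝ) < s₀.re / 2 := by linarith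
    have hdiff : ∀ᵐ t : ℝ ∂μ, ∀ s ∈ Metric.ball s₀ (s₀.re/2),
        HasDerivAt (fun s : ℂ => Complex.exp (-s * (t:ℝ)) • h t)
          ((Complex.exp (-s * t) * (-(t:ℂ))) • h t) s := by
      refine Eventually.of_forall fun t s _ => ?_
      have : HasDerivAt (fun s : ℂ => -s * t) (-(t:ℂ)) s := by
        simpa using ((hasDerivAt_id s).neg.mul_const (t:ℂ))
      exact (this.cexp).smul_const (h t)
    have hbnd : ∀ᵐ t : ℝ ∂μ, ∀ s ∈ Metric.ball s₀ (s₀.re/2),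
        ‖(Complex.exp (-s * (t:ℝ)) * (-(t:ℂ))) • h t‖ ≤ (2 / s₀.re) * ‖h t‖ := by
      rw [hμ, ae_restrict_iff' measurableSet_Ici]
      refine Eventually.of_forall fun t ht s hsball => ?_
      replace ht : (0:ℝ) ≤ t := ht
      have hre : s₀.re / 2 ≤ s.re := by
        have h1 : ‖s - s₀‖ < s₀.re / 2 := by
          simpa [Metric.mem_ball, Complex.dist_eq] using hsball
        have h2 : |(s - s₀).re| ≤ ‖s - s₀‖ := Complex.abs_re_le_norm _
        have h3 : |s.re - s₀.re| < s₀.re / 2 := by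
          simpa [Complex.sub_re] using lt_of_le_of_lt h2 h1
        have := abs_lt.1 h3
        linarith [this.1]
      rw [norm_smul, norm_mul, Complex.norm_exp]
      have habs : ‖-(t:ℂ)‖ = t := by
        simp [_root_.abs_of_nonneg ht]
      rw [habs]
      have hre2 : (-s * t).re = -(s.re * t) := by simp [Complex.mul_re]
      rw [hre2]
      have key : Real.exp (-(s.re * t)) * t ≤ 2 / s₀.re := by
        have k1 : Real.exp (-(s.re * t)) ≤ Real.exp (-(s₀.re/2 * t)) := by
          apply Real.exp_le_exp.2
          simp only [neg_le_neg_iff]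
          exact mul_le_mul_of_nonneg_right hre ht
        have k2 := exp_mul_le (t := t) hε
        have : Real.exp (-(s.re * t)) * t ≤ Real.exp (-(s₀.re/2 * t)) * t :=
          mul_le_mul_of_nonneg_right k1 ht
        calc Real.exp (-(s.re * t)) * t ≤ Real.exp (-(s₀.re/2 * t)) * t := this
          _ ≤ 1 / (s₀.re/2) := k2
          _ = 2 / s₀.re := by field_simp
      calc Real.exp (-(s.re * t)) * t * ‖h t‖ ≤ (2 / s₀.re) * ‖h t‖ :=
            mul_le_mul_of_nonneg_right key (norm_nonneg _)
        _ = 2 / s₀.re * ‖h t‖ := rfl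
    obtain ⟨-, hd⟩ := hasDerivAt_integral_of_dominated_loc_of_deriv_le (μ := μ)
      (F := fun (s : ℂ) (t : ℝ) => Complex.exp (-s * t) • h t)
      (F' := fun (s : ℂ) (t : ℝ) => (Complex.exp (-s * t) * (-(t:ℂ))) • h t)
      (x₀ := s₀) (bound := fun t => (2 / s₀.re) * ‖h t‖) (Metric.ball_mem_nhds s₀ hε)
      (Eventually.of_forall fun s => hFmeas s)
      (hInt s₀ hs₀'.le)
      ((Continuous.aestronglyMeasurable (f := fun t : ℝ => Complex.exp (-s₀ * t) * (-(t:ℂ))) (by fun_prop)).smul hmeas)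
      hbnd (hint.norm.const_mul _) hdiff
    rw [hG']
    exact hd.differentiableAt.differentiableWithinAt
  -- continuity on the closed right half-plane
  have hcont : ContinuousOn G {s : ℂ | 0 ≤ s.re} := by
    rw [hG']
    apply continuousOn_of_dominated (bound := fun t => ‖h t‖)
      (fun s _ => hFmeas s) (fun s hs => hbound s hs) hint.norm
    exact Eventually.of_forall fun t => (Continuous.continuousOn (by fun_prop))
  -- the continuous linear map realizing sigmaMax as a norm
  let l : Matrix (Fin p) (Fin m) ℂ →ₗ[ℂ] (EuclideanSpace ℂ (Fin m) →L[ℂ] EuclideanSpace ℂ (Fin p)) :=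
    (LinearMap.toContinuousLinearMap :
      (EuclideanSpace ℂ (Fin m) →ₗ[ℂ] EuclideanSpace ℂ (Fin p)) ≃ₗ[ℂ] _).toLinearMap.comp
      (Matrix.toEuclideanLin.toLinearMap)
  let L := LinearMap.toContinuousLinearMap l
  have hLnorm : ∀ M : Matrix (Fin p) (Fin m) ℂ, sigmaMax M = ‖L M‖ := fun M => rfl
  set M₀ := ‖L‖ * ∫ t, ‖h t‖ ∂μ with hM₀
  have hfub : ∀ s : ℂ, 0 ≤ s.re → sigmaMax (G s) ≤ M₀ := by
    intro s hs
    rw [hLnorm]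
    exact (L.le_opNorm _).trans (mul_le_mul_of_nonneg_left (hGnorm s hs) (norm_nonneg _))
  have hIre : ∀ ω : ℝ, (Complex.I * ω).re = 0 := by intro ω; simp
  have hbdd2 : BddAbove (Set.range fun ω : ℝ => sigmaMax (G (Complex.I * ω))) := by
    refine ⟨M₀, ?_⟩
    rintro _ ⟨ω, rfl⟩
    exact hfub _ (le_of_eq (hIre ω).symm)
  have hbdd1 : BddAbove (Set.range fun s : {s : ℂ // 0 < s.re} => sigmaMax (G s.1)) := by
    refine ⟨M₀, ?_⟩
    rintro _ ⟨s, rfl⟩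
    exact hfub _ s.2.le
  set Cb := ⨆ ω : ℝ, sigmaMax (G (Complex.I * ω)) with hCb
  -- Phragmén–Lindelöf
  have hPL : ∀ z : ℂ, 0 ≤ z.re → sigmaMax (G z) ≤ Cb := by
    intro z hz
    have := PhragmenLindelof.right_half_plane_of_bounded_on_real
      (f := fun z => L (G z)) (C := Cb) (z := z)
      ⟨L.differentiable.comp_differentiableOn hdiffG,
       by rw [Complex.closure_setOf_lt_re]; exact L.continuous.comp_continuousOn hcont⟩
      ⟨1, one_lt_two, 0, Asymptotics.IsBigO.of_bound M₀ (by
        rw [eventually_inf_principal]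
        refine Eventually.of_forall fun w hw => ?_
        simp only [zero_mul, Real.exp_zero, norm_one, mul_one]
        exact hLnorm (G w) ▸ hfub w (le_of_lt hw))⟩
      ⟨M₀, eventually_map.2 (by
        filter_upwards [eventually_ge_atTop (0:ℝ)] with x hx
        exact hLnorm (G x) ▸ hfub x (by simpa))⟩
      (fun x => by
        have : (x:ℂ) * Complex.I = Complex.I * x := mul_comm _ _
        rw [this, ← hLnorm]
        exact le_ciSup hbdd2 x)
      hz
    rw [hLnorm]
    exact this
  refine ⟨hdiffG, le_antisymm ?_ ?_⟩
  · haveI : Nonempty {s : ℂ // 0 < s.re} := ⟨⟨1, by norm_num⟩⟩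
    exact ciSup_le fun s => hPL s.1 s.2.le
  · refine ciSup_le fun ω => ?_
    have h1 : Tendsto (fun σ : ℝ => (σ : ℂ) + Complex.I * ω) (nhdsWithin 0 (Set.Ioi 0))
        (nhdsWithin (Complex.I * ω) {s : ℂ | 0 ≤ s.re}) := by
      apply tendsto_nhdsWithin_of_tendsto_nhds_of_eventually_within
      · have : Tendsto (fun σ : ℝ => (σ : ℂ) + Complex.I * ω) (nhds 0) (nhds (Complex.I * ω)) := by
          have hc : Continuous fun σ : ℝ => (σ : ℂ) + Complex.I * ω := by fun_prop
          have := hc.tendsto (0:ℝ)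
          simpa using this
        exact this.mono_left nhdsWithin_le_nhds
      · filter_upwards [self_mem_nhdsWithin] with σ hσ
        simp only [Set.mem_setOf_eq, Complex.add_re, Complex.ofReal_re, hIre, add_zero]
        exact (le_of_lt hσ)
    have h2 : Tendsto (fun σ : ℝ => G ((σ:ℂ) + Complex.I * ω)) (nhdsWithin 0 (Set.Ioi 0))
        (nhds (G (Complex.I * ω))) :=
      (hcont (Complex.I * ω) (le_of_eq (hIre ω).symm)).tendsto.comp h1
    have h3 : Tendsto (fun σ : ℝ => sigmaMax (G ((σ:ℂ) + Complex.I * ω)))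
        (nhdsWithin 0 (Set.Ioi 0)) (nhds (sigmaMax (G (Complex.I * ω)))) := by
      simp only [hLnorm]
      exact (L.continuous.norm.tendsto _).comp h2
    refine le_of_tendsto h3 ?_
    filter_upwards [self_mem_nhdsWithin] with σ hσ
    refine le_ciSup hbdd1 (⟨(σ:ℂ) + Complex.I * ω, ?_⟩ : {s : ℂ // 0 < s.re})
    simp only [Set.mem_setOf_eq, Complex.add_re, Complex.ofReal_re, hIre, add_zero]
    exact hσ
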